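/- Let n ≥ 3 be an integer and F a finite field. There exists a pair (g0, g1) ∈ Fⁿ × Fⁿ such that every entry of g0 is nonzero and for all indices 1 ≤ i < j ≤ n one has g0,i·g1,j − g0,j·g1,i ≠ 0, if and only if |F| ≥ n. -/
import Mathlib


/-- Let n ≥ 3 and F a finite field. There exists (g0, g1) ∈ Fⁿ × Fⁿ with
every entry of g0 nonzero and, for all 1 ≤ i < j ≤ n, g0,i·g1,j − g0,j·g1,i ≠ 0,
if and only if |F| ≥ n. -/
theorem stmt3 (n : ℕ) (hn : 3 ≤ n) (F : Type*) [Field F] [Fintype F] :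
    (∃ g0 g1 : Fin n → F,
      (∀ i, g0 i ≠ 0) ∧ ∀ i j : Fin n, i < j → g0 i * g1 j - g0 j * g1 i ≠ 0)
    ↔ n ≤ Fintype.card F := by
  constructor
  · rintro ⟨g0, g1, h0, h1⟩
    have hf : Function.Injective (fun i => g1 i / g0 i) := by
      intro i j hij
      by_contra hne
      have key : ∀ a b : Fin n, a < b → g1 a / g0 a = g1 b / g0 b → False := by
        intro a b hab heq
        have : g1 a * g0 b = g1 b * g0 a :=
          (div_eq_div_iff (h0 a) (h0 b)).1 heq
        exact h1 a b hab (by ring_nf; linear_combination -this)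
      rcases lt_or_gt_of_ne hne with h | h
      · exact key i j h hij
      · exact key j i h hij.symm
    simpa using Fintype.card_le_of_injective _ hf
  · intro h
    have : Nonempty (Fin n ↪ F) := by
      apply Function.Embedding.nonempty_of_card_le
      simpa using h
    obtain ⟨f⟩ := this
    refine ⟨fun _ => 1, f, fun i => one_ne_zero, fun i j hij => ?_⟩
    simp only [one_mul, mul_one]
    exact sub_ne_zero.2 fun he => (ne_of_lt hij) (f.injective he.symm)
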